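/- arXiv:2104.09575 — 3 statements merged into one kernel-verified Lean document; each statement's English description precedes it below -/
import Mathlib

section
/- Let $d \in \mathbb{N}$, $p > d$, $n \in \mathbb{N}$, and let $I_n = \{m/n : m = 0, \dots, n-1\}^d \subset (0,1)^d$ be the uniform lattice. Then for every $f \in W^{1,p}((0,1)^d)$ one has $\left| n^{-d} \sum_{\xi \in I_n} f(\xi) - \int_{(0,1)^d} f(x)\,dx \right| \leq \frac{2 n^{-1 + d/p}}{1 - d/p} \|\nabla f\|_{L^p((0,1)^d)}$. -/
open MeasureTheory Set
open scoped ENNReal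
set_option maxHeartbeats 2000000

theorem ofReal_norm_eq_coe_nnnorm {E : Type*} [NormedAddCommGroup E] (a : E) :
    ENNReal.ofReal ‖a‖ = (‖a‖₊ : ℝ≥0∞) := ofReal_norm a

theorem ofReal_integral_norm_eq_lintegral_nnnorm {α : Type*} [MeasurableSpace α] {μ : Measure α}
    {P : Type*} [NormedAddCommGroup P] {f : α → P} (hf : Integrable f μ) :
    ENNReal.ofReal (∫ x, ‖f x‖ ∂μ) = ∫⁻ x, (‖f x‖₊ : ℝ≥0∞) ∂μ :=
  ofReal_integral_norm_eq_lintegral_enorm hf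

theorem Measurable.ennnorm {β α : Type*} [MeasurableSpace β] [NormedAddCommGroup α]
    [MeasurableSpace α] [OpensMeasurableSpace α] {f : β → α} (hf : Measurable f) :
    Measurable fun a => (‖f a‖₊ : ℝ≥0∞) :=
  hf.nnnorm.coe_nnreal_ennreal

theorem interior_unitCube (d : ℕ) :
    interior (Icc (0:Fin d → ℝ) 1) = Set.univ.pi fun _ : Fin d => Set.Ioo (0 : ℝ) 1 := by
  rw [← Set.pi_univ_Icc, interior_pi_set finite_univ]
  simp [interior_Icc]

theorem seg_bound (d : ℕ) (f : (Fin d → ℝ) → ℂ) (f' : (Fin d → ℝ) → ((Fin d → ℝ) →L[ℝ] ℂ))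
    (hf : ContinuousOn f (Set.Icc 0 1))
    (hdf : ∀ x ∈ (Set.univ.pi fun _ : Fin d => Set.Ioo (0 : ℝ) 1), HasFDerivAt f (f' x) x)
    (ξ x : Fin d → ℝ) (hξ : ξ ∈ Set.Icc (0:Fin d → ℝ) 1)
    (hx : x ∈ (Set.univ.pi fun _ : Fin d => Set.Ioo (0 : ℝ) 1)) :
    (‖f x - f ξ‖₊ : ℝ≥0∞) ≤ ENNReal.ofReal ‖x - ξ‖ *
      ∫⁻ t in Set.Ioo (0:ℝ) 1, (‖fderiv ℝ f (ξ + t • (x - ξ))‖₊ : ℝ≥0∞) := by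
  rcases eq_or_ne x ξ with rfl | hne
  · simp
  set U := Set.univ.pi fun _ : Fin d => Set.Ioo (0 : ℝ) 1 with hU
  set v := x - ξ with hv
  set γ : ℝ → (Fin d → ℝ) := fun t => ξ + t • v with hγ
  have hγcont : Continuous γ := continuous_const.add (continuous_id.smul continuous_const)
  have hxIcc : x ∈ Icc (0:Fin d → ℝ) 1 := by
    rw [hU, ← interior_unitCube] at hx; exact interior_subset hx
  have hcombo : ∀ t : ℝ, γ t = t • x + (1 - t) • ξ := by
    intro t; rw [hγ]; simp only [hv]; module
  have hγIcc : ∀ t ∈ Icc (0:ℝ) 1, γ t ∈ Icc (0:Fin d → ℝ) 1 := by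
    intro t ht
    rw [hcombo]
    exact (convex_Icc _ _) hxIcc hξ ht.1 (by linarith [ht.2]) (by ring)
  have hγU : ∀ t ∈ Ioc (0:ℝ) 1, γ t ∈ U := by
    intro t ht
    rw [hU, ← interior_unitCube, hcombo]
    refine (convex_Icc _ _).combo_interior_closure_mem_interior ?_ ?_ ht.1 (by linarith [ht.2])
      (by ring)
    · rw [interior_unitCube]; exact hx
    · rw [isClosed_Icc.closure_eq]; exact hξ
  have hvpos : (0:ℝ) < ‖v‖ := by
    rw [norm_pos_iff]; exact sub_ne_zero.mpr hne
  set I := ∫⁻ t in Set.Ioo (0:ℝ) 1, (‖fderiv ℝ f (ξ + t • v)‖₊ : ℝ≥0∞) with hI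
  by_cases htop : I = ⊤
  · rw [htop, ENNReal.mul_top (ENNReal.ofReal_pos.mpr hvpos).ne']
    exact le_top
  -- integrable branch
  set g' : ℝ → ℂ := fun t => f' (γ t) v with hg'
  have heqd : ∀ t ∈ Ioc (0:ℝ) 1, f' (γ t) = fderiv ℝ f (γ t) := fun t ht =>
    ((hdf _ (hγU t ht)).fderiv).symm
  have hmeasfd : Measurable fun t => fderiv ℝ f (γ t) :=
    (measurable_fderiv ℝ f).comp hγcont.measurable
  have hmeasfdv : Measurable fun t => (fderiv ℝ f (γ t)) v := by
    exact (ContinuousLinearMap.apply ℝ ℂ v).continuous.measurable.comp hmeasfd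
  have haesm : AEStronglyMeasurable g' (volume.restrict (Ioc (0:ℝ) 1)) := by
    refine hmeasfdv.aestronglyMeasurable.congr ?_
    filter_upwards [ae_restrict_mem measurableSet_Ioc] with t ht
    show _ = (f' (γ t)) v
    rw [heqd t ht]
  have hrIoo : volume.restrict (Ioo (0:ℝ) 1) = volume.restrict (Ioc (0:ℝ) 1) :=
    Measure.restrict_congr_set Ioo_ae_eq_Ioc
  have hptw : ∀ t ∈ Ioc (0:ℝ) 1, (‖g' t‖₊ : ℝ≥0∞) ≤
      ENNReal.ofReal ‖v‖ * (‖fderiv ℝ f (ξ + t • v)‖₊ : ℝ≥0∞) := by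
    intro t ht
    show (‖(f' (γ t)) v‖₊ : ℝ≥0∞) ≤
      ENNReal.ofReal ‖v‖ * (‖fderiv ℝ f (ξ + t • v)‖₊ : ℝ≥0∞)
    rw [heqd t ht, ← ofReal_norm_eq_coe_nnnorm, ← ofReal_norm_eq_coe_nnnorm,
      ← ENNReal.ofReal_mul (norm_nonneg _)]
    apply ENNReal.ofReal_le_ofReal
    rw [mul_comm]
    exact ContinuousLinearMap.le_opNorm _ v
  have hmeas2 : Measurable fun t : ℝ => (‖fderiv ℝ f (ξ + t • v)‖₊ : ℝ≥0∞) :=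
    hmeasfd.ennnorm
  have hlint : ∫⁻ t in Ioc (0:ℝ) 1, (‖g' t‖₊ : ℝ≥0∞) ≤ ENNReal.ofReal ‖v‖ * I := by
    calc ∫⁻ t in Ioc (0:ℝ) 1, (‖g' t‖₊ : ℝ≥0∞)
        ≤ ∫⁻ t in Ioc (0:ℝ) 1, ENNReal.ofReal ‖v‖ * (‖fderiv ℝ f (ξ + t • v)‖₊ : ℝ≥0∞) :=
          setLIntegral_mono (measurable_const.mul hmeas2) hptw
      _ = ENNReal.ofReal ‖v‖ * ∫⁻ t in Ioc (0:ℝ) 1, (‖fderiv ℝ f (ξ + t • v)‖₊ : ℝ≥0∞) :=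
          lintegral_const_mul' _ _ ENNReal.ofReal_ne_top
      _ = ENNReal.ofReal ‖v‖ * I := by rw [hI, hrIoo]
  have hfin : ∫⁻ t in Ioc (0:ℝ) 1, (‖g' t‖₊ : ℝ≥0∞) < ⊤ :=
    hlint.trans_lt (ENNReal.mul_lt_top ENNReal.ofReal_lt_top (lt_top_iff_ne_top.mpr htop))
  have hInt : IntegrableOn g' (Ioc (0:ℝ) 1) := ⟨haesm, hfin⟩
  have hII : IntervalIntegrable g' volume 0 1 := by
    rw [intervalIntegrable_iff_integrableOn_Ioc_of_le zero_le_one]; exact hInt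
  have hcont : ContinuousOn (f ∘ γ) (Icc (0:ℝ) 1) :=
    hf.comp hγcont.continuousOn hγIcc
  have hderiv : ∀ t ∈ Ioo (0:ℝ) 1, HasDerivWithinAt (f ∘ γ) (g' t) (Ioi t) t := by
    intro t ht
    have h1 : HasDerivAt γ v t := by
      simpa [hγ] using ((hasDerivAt_id t).smul_const v).const_add ξ
    exact ((hdf _ (hγU t (Ioo_subset_Ioc_self ht))).comp_hasDerivAt t h1).hasDerivWithinAt
  have key : f x - f ξ = ∫ t in (0:ℝ)..1, g' t := by
    rw [intervalIntegral.integral_eq_sub_of_hasDeriv_right_of_le zero_le_one hcont hderiv hII]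
    have h0 : γ 0 = ξ := by rw [hγ]; simp
    have h1 : γ 1 = x := by rw [hγ]; simp [hv]
    simp only [Function.comp_apply, h0, h1]
  calc (‖f x - f ξ‖₊ : ℝ≥0∞) = ENNReal.ofReal ‖f x - f ξ‖ := (ofReal_norm_eq_coe_nnnorm _).symm
    _ ≤ ENNReal.ofReal (∫ t in Ioc (0:ℝ) 1, ‖g' t‖) := by
        apply ENNReal.ofReal_le_ofReal
        rw [key, ← intervalIntegral.integral_of_le zero_le_one]
        exact intervalIntegral.norm_integral_le_integral_norm zero_le_one
    _ = ∫⁻ t in Ioc (0:ℝ) 1, (‖g' t‖₊ : ℝ≥0∞) := ofReal_integral_norm_eq_lintegral_nnnorm hInt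
    _ ≤ ENNReal.ofReal ‖v‖ * I := hlint


theorem scal_bound (d : ℕ) (g : (Fin d → ℝ) → ℝ≥0∞) (hg : Measurable g)
    (c : Fin d → ℝ) (t : ℝ) (ht : 0 < t) (Q s : Set (Fin d → ℝ)) (hs : MeasurableSet s)
    (hQs : ∀ x ∈ Q, c + t • (x - c) ∈ s) :
    ∫⁻ x in Q, g (c + t • (x - c)) ≤ ENNReal.ofReal (t ^ (-(d:ℝ))) * ∫⁻ y in s, g y := by
  set ψ : (Fin d → ℝ) → (Fin d → ℝ) := fun x => c + t • (x - c) with hψ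
  have hψeq : ψ = (fun y => (c - t • c) + y) ∘ (fun x => t • x) := by
    funext x; simp [hψ, smul_sub]; module
  have hψc : Continuous ψ := by
    rw [hψ]; fun_prop
  have hψm : Measurable ψ := hψc.measurable
  have hmap : Measure.map ψ (volume : Measure (Fin d → ℝ)) =
      ENNReal.ofReal (t ^ (-(d:ℝ))) • volume := by
    rw [hψeq, ← Measure.map_map (measurable_const_add _) (measurable_const_smul t)]
    rw [Measure.map_addHaar_smul volume ht.ne']
    rw [Measure.map_smul]
    rw [Measure.IsAddLeftInvariant.map_add_left_eq_self (c - t • c)]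
    congr 1
    rw [abs_of_pos (by positivity), ← Real.rpow_natCast, ← Real.rpow_neg ht.le]
    norm_num
  calc ∫⁻ x in Q, g (ψ x) ≤ ∫⁻ x in ψ ⁻¹' s, g (ψ x) :=
        lintegral_mono_set (fun x hx => hQs x hx)
    _ = ∫⁻ y in s, g y ∂(Measure.map ψ volume) := (setLIntegral_map hs hg hψm).symm
    _ = ENNReal.ofReal (t ^ (-(d:ℝ))) * ∫⁻ y in s, g y := by
        rw [hmap, Measure.restrict_smul, lintegral_smul_measure, smul_eq_mul]

theorem holder_set (p q : ℝ) (hpq : p.HolderConjugate q) {α : Type*} [MeasurableSpace α]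
    (μ : Measure α) (s : Set α) (g : α → ℝ≥0∞) (hg : Measurable g) :
    ∫⁻ x in s, g x ∂μ ≤ (∫⁻ x in s, g x ^ p ∂μ) ^ (1/p) * (μ s) ^ (1/q) := by
  have h := ENNReal.lintegral_mul_le_Lp_mul_Lq (μ.restrict s) hpq hg.aemeasurable
    aemeasurable_const (g := fun _ => (1:ℝ≥0∞))
  simp only [mul_one, ENNReal.one_rpow, lintegral_const, Measure.restrict_apply
    MeasurableSet.univ, univ_inter] at h
  simpa using h


theorem rpow_int_lintegral (a : ℝ) (ha0 : 0 ≤ a) (ha1 : a < 1) :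
    ∫⁻ t in Ioo (0:ℝ) 1, ENNReal.ofReal (t ^ (-a)) = ENNReal.ofReal (1 / (1 - a)) := by
  have hii : IntervalIntegrable (fun t : ℝ => t ^ (-a)) volume 0 1 :=
    intervalIntegral.intervalIntegrable_rpow' (by linarith)
  have hIoc : IntegrableOn (fun t : ℝ => t ^ (-a)) (Ioc (0:ℝ) 1) volume := by
    rw [← intervalIntegrable_iff_integrableOn_Ioc_of_le zero_le_one]; exact hii
  have hres : volume.restrict (Ioo (0:ℝ) 1) = volume.restrict (Ioc (0:ℝ) 1) :=
    Measure.restrict_congr_set Ioo_ae_eq_Ioc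
  have hIoo : IntegrableOn (fun t : ℝ => t ^ (-a)) (Ioo (0:ℝ) 1) volume := by
    rw [IntegrableOn, hres]; exact hIoc
  rw [← ofReal_integral_eq_lintegral_ofReal hIoo]
  · congr 1
    have : ∫ t in Ioo (0:ℝ) 1, t ^ (-a) = ∫ t in Ioc (0:ℝ) 1, t ^ (-a) := by
      rw [show (∫ t in Ioo (0:ℝ) 1, t ^ (-a)) = ∫ t in Ioo (0:ℝ) 1, t ^ (-a) ∂volume from rfl]
      rw [hres]
    rw [this, ← intervalIntegral.integral_of_le zero_le_one,
      integral_rpow (Or.inl (by linarith))]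
    rw [Real.zero_rpow (by linarith : -a + 1 ≠ 0)]
    ring_nf
    rw [Real.one_rpow]
    ring
  · filter_upwards [ae_restrict_mem measurableSet_Ioo] with t ht
    exact Real.rpow_nonneg ht.1.le _


theorem cube_bound (d : ℕ) (hd : 0 < d) (p : ℝ) (hp : (d : ℝ) < p)
    (f : (Fin d → ℝ) → ℂ) (f' : (Fin d → ℝ) → ((Fin d → ℝ) →L[ℝ] ℂ))
    (hf : ContinuousOn f (Set.Icc 0 1))
    (hdf : ∀ x ∈ (Set.univ.pi fun _ : Fin d => Set.Ioo (0 : ℝ) 1), HasFDerivAt f (f' x) x)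
    (ξ η : Fin d → ℝ) (r : ℝ) (hr : 0 < r) (hη : ∀ i, η i = ξ i + r)
    (hξ0 : ∀ i, 0 ≤ ξ i) (hη1 : ∀ i, η i ≤ 1) :
    ∫⁻ x in Icc ξ η, (‖f x - f ξ‖₊ : ℝ≥0∞) ≤
      ENNReal.ofReal (r ^ (1 + ((d:ℝ) - (d:ℝ)/p)) / (1 - (d:ℝ)/p)) *
        (∫⁻ y in Icc (0:Fin d → ℝ) 1, (‖fderiv ℝ f y‖₊ : ℝ≥0∞) ^ p) ^ (1/p) := by
  have hd1 : (1:ℝ) ≤ (d:ℝ) := by exact_mod_cast hd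
  have hp1 : 1 < p := lt_of_le_of_lt hd1 hp
  have hppos : 0 < p := by linarith
  set a : ℝ := (d:ℝ)/p with ha
  have ha0 : 0 < a := by positivity
  have ha1 : a < 1 := by rw [ha, div_lt_one hppos]; exact hp
  set q : ℝ := p/(p-1) with hq
  have hpq : p.HolderConjugate q := Real.HolderConjugate.conjExponent hp1
  have hinvq : 1/q = 1 - 1/p := by
    field_simp [hq]
    rw [hq, div_div_eq_mul_div, mul_div_cancel_left₀ _ hppos.ne']
  set F : (Fin d → ℝ) → ℝ≥0∞ := fun y => (‖fderiv ℝ f y‖₊ : ℝ≥0∞) with hF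
  have hFm : Measurable F := (measurable_fderiv ℝ f).ennnorm
  set Ip : ℝ≥0∞ := ∫⁻ y in Icc (0:Fin d → ℝ) 1, F y ^ p with hIp
  set Qo : Set (Fin d → ℝ) := Set.univ.pi fun i => Ioo (ξ i) (η i) with hQo
  have hQoU : Qo ⊆ Set.univ.pi fun _ : Fin d => Set.Ioo (0 : ℝ) 1 := by
    intro x hx i _
    have h := hx i (mem_univ i)
    exact ⟨lt_of_le_of_lt (hξ0 i) h.1, lt_of_lt_of_le h.2 (hη1 i)⟩
  have hres : volume.restrict (Icc ξ η) = volume.restrict Qo := by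
    refine (Measure.restrict_congr_set ?_).symm
    rw [volume_pi]
    exact Measure.univ_pi_Ioo_ae_eq_Icc
  have hξIcc : ξ ∈ Icc (0:Fin d → ℝ) 1 := by
    constructor
    · intro i; simpa using hξ0 i
    · intro i
      have h2 := hη1 i
      rw [hη i] at h2
      show ξ i ≤ (1 : Fin d → ℝ) i
      simp only [Pi.one_apply]
      linarith
  -- measurability of inner integral data
  have hψc : Continuous fun z : (Fin d → ℝ) × ℝ => ξ + z.2 • (z.1 - ξ) := by fun_prop
  have hFψm : Measurable fun z : (Fin d → ℝ) × ℝ => F (ξ + z.2 • (z.1 - ξ)) :=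
    hFm.comp hψc.measurable
  have hnorm : ∀ x ∈ Qo, ‖x - ξ‖ ≤ r := by
    intro x hx
    rw [pi_norm_le_iff_of_nonneg hr.le]
    intro i
    have h := hx i (mem_univ i)
    have hri := hη i
    show ‖x i - ξ i‖ ≤ r
    rw [Real.norm_eq_abs]
    exact abs_le.mpr ⟨by linarith [h.1], by linarith [h.2]⟩
  have hinner_m : Measurable fun x => ∫⁻ t in Ioo (0:ℝ) 1, F (ξ + t • (x - ξ)) :=
    Measurable.lintegral_prod_right hFψm
  have step2 : ∫⁻ x in Qo, (‖f x - f ξ‖₊ : ℝ≥0∞) ≤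
      ∫⁻ x in Qo, ENNReal.ofReal r * ∫⁻ t in Ioo (0:ℝ) 1, F (ξ + t • (x - ξ)) := by
    refine setLIntegral_mono (measurable_const.mul hinner_m) ?_
    intro x hx
    refine le_trans (seg_bound d f f' hf hdf ξ x hξIcc (hQoU hx)) ?_
    exact mul_le_mul_left (ENNReal.ofReal_le_ofReal (hnorm x hx)) _
  have step3 : ∫⁻ x in Qo, ENNReal.ofReal r * ∫⁻ t in Ioo (0:ℝ) 1, F (ξ + t • (x - ξ))
      = ENNReal.ofReal r * ∫⁻ t in Ioo (0:ℝ) 1, ∫⁻ x in Qo, F (ξ + t • (x - ξ)) := by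
    rw [lintegral_const_mul' _ _ ENNReal.ofReal_ne_top]
    congr 1
    exact lintegral_lintegral_swap hFψm.aemeasurable
  have hvolQo : volume Qo = ENNReal.ofReal (r ^ (d:ℕ)) := by
    rw [hQo, volume_pi, Measure.pi_pi]
    simp only [Real.volume_Ioo]
    have hcongr : ∀ i ∈ Finset.univ, ENNReal.ofReal (η i - ξ i) = ENNReal.ofReal r :=
      fun i _ => by rw [hη i]; ring_nf
    rw [Finset.prod_congr rfl hcongr, Finset.prod_const, Finset.card_univ, Fintype.card_fin,
      ← ENNReal.ofReal_pow hr.le]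
  have step5 : ∀ t ∈ Ioo (0:ℝ) 1, ∫⁻ x in Qo, F (ξ + t • (x - ξ)) ≤
      ENNReal.ofReal (t ^ (-a)) * (ENNReal.ofReal (r ^ ((d:ℝ) - a)) * Ip ^ (1/p)) := by
    intro t ht
    have hmono : ∀ x ∈ Qo, ξ + t • (x - ξ) ∈ Icc (0:Fin d → ℝ) 1 := by
      intro x hx
      have hxi : ∀ i, ξ i < x i ∧ x i < ξ i + r := by
        intro i
        have h := hx i (mem_univ i)
        exact ⟨h.1, by have := h.2; rw [hη i] at this; linarith⟩
      constructor
      · intro i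
        show (0:Fin d → ℝ) i ≤ ξ i + t * (x i - ξ i)
        simp only [Pi.zero_apply]
        nlinarith [(hxi i).1, ht.1, hξ0 i]
      · intro i
        show ξ i + t * (x i - ξ i) ≤ (1:Fin d → ℝ) i
        simp only [Pi.one_apply]
        have h1 := hη1 i
        rw [hη i] at h1
        nlinarith [(hxi i).2, ht.1, ht.2, (hxi i).1]
    have hH := holder_set p q hpq volume Qo (fun x => F (ξ + t • (x - ξ)))
      (hFm.comp (by fun_prop))
    have hS := scal_bound d (fun y => F y ^ p) (hFm.pow_const p) ξ t ht.1 Qo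
      (Icc 0 1) measurableSet_Icc hmono
    calc ∫⁻ x in Qo, F (ξ + t • (x - ξ))
        ≤ (∫⁻ x in Qo, F (ξ + t • (x - ξ)) ^ p) ^ (1/p) * (volume Qo) ^ (1/q) := hH
      _ ≤ (ENNReal.ofReal (t ^ (-(d:ℝ))) * Ip) ^ (1/p) * (volume Qo) ^ (1/q) :=
          mul_le_mul_left (ENNReal.rpow_le_rpow hS (by positivity)) _
      _ = ENNReal.ofReal (t ^ (-a)) * (ENNReal.ofReal (r ^ ((d:ℝ) - a)) * Ip ^ (1/p)) := by
          rw [hvolQo, ENNReal.mul_rpow_of_nonneg _ _ (by positivity : (0:ℝ) ≤ 1/p),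
            ENNReal.ofReal_rpow_of_pos (Real.rpow_pos_of_pos ht.1 _),
            ENNReal.ofReal_rpow_of_pos (by positivity),
            ← Real.rpow_natCast r d, ← Real.rpow_mul hr.le, ← Real.rpow_mul ht.1.le]
          rw [show -(d:ℝ) * (1/p) = -a by rw [ha]; field_simp]
          rw [show (d:ℝ) * (1/q) = (d:ℝ) - a by
            rw [hinvq, ha]; field_simp]
          ring
  have hmeas_t : Measurable fun t : ℝ => ENNReal.ofReal (t ^ (-a)) := by
    fun_prop
  have step6 : ∫⁻ t in Ioo (0:ℝ) 1, ∫⁻ x in Qo, F (ξ + t • (x - ξ))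
      ≤ ENNReal.ofReal (1/(1-a)) * (ENNReal.ofReal (r ^ ((d:ℝ) - a)) * Ip ^ (1/p)) := by
    calc ∫⁻ t in Ioo (0:ℝ) 1, ∫⁻ x in Qo, F (ξ + t • (x - ξ))
        ≤ ∫⁻ t in Ioo (0:ℝ) 1,
            ENNReal.ofReal (t ^ (-a)) * (ENNReal.ofReal (r ^ ((d:ℝ) - a)) * Ip ^ (1/p)) :=
          setLIntegral_mono (hmeas_t.mul_const _) step5
      _ = (∫⁻ t in Ioo (0:ℝ) 1, ENNReal.ofReal (t ^ (-a))) *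
            (ENNReal.ofReal (r ^ ((d:ℝ) - a)) * Ip ^ (1/p)) :=
          lintegral_mul_const _ hmeas_t
      _ = ENNReal.ofReal (1/(1-a)) * (ENNReal.ofReal (r ^ ((d:ℝ) - a)) * Ip ^ (1/p)) := by
          rw [rpow_int_lintegral a ha0.le ha1]
  calc ∫⁻ x in Icc ξ η, (‖f x - f ξ‖₊ : ℝ≥0∞)
      = ∫⁻ x in Qo, (‖f x - f ξ‖₊ : ℝ≥0∞) := by rw [hres]
    _ ≤ ∫⁻ x in Qo, ENNReal.ofReal r * ∫⁻ t in Ioo (0:ℝ) 1, F (ξ + t • (x - ξ)) := step2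
    _ = ENNReal.ofReal r * ∫⁻ t in Ioo (0:ℝ) 1, ∫⁻ x in Qo, F (ξ + t • (x - ξ)) := step3
    _ ≤ ENNReal.ofReal r *
        (ENNReal.ofReal (1/(1-a)) * (ENNReal.ofReal (r ^ ((d:ℝ) - a)) * Ip ^ (1/p))) :=
        mul_le_mul_right step6 _
    _ = ENNReal.ofReal (r ^ (1 + ((d:ℝ) - a)) / (1 - a)) * Ip ^ (1/p) := by
        have h1a : 0 < 1 - a := by linarith
        rw [← mul_assoc, ← mul_assoc, ← ENNReal.ofReal_mul hr.le,
          ← ENNReal.ofReal_mul (mul_nonneg hr.le (one_div_nonneg.mpr h1a.le))]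
        congr 1
        rw [Real.rpow_add hr, Real.rpow_one]
        field_simp

/-- Quadrature error bound: for `f ∈ W^{1,p}((0,1)^d)` with `p > d`
(realized as a continuous function on the closed cube, differentiable on the
open cube, with derivative in `L^p`), the uniform lattice sum of mesh `1/n`
approximates the integral with error `2 n^{-1+d/p}/(1-d/p) ‖∇f‖_{L^p}`. -/
theorem lattice_sum_approx_integral (d : ℕ) (hd : 0 < d) (p : ℝ) (hp : (d : ℝ) < p)
    (n : ℕ) (hn : 0 < n)
    (f : (Fin d → ℝ) → ℂ) (f' : (Fin d → ℝ) → ((Fin d → ℝ) →L[ℝ] ℂ))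
    (hf : ContinuousOn f (Set.Icc 0 1))
    (hdf : ∀ x ∈ (Set.univ.pi fun _ : Fin d => Set.Ioo (0 : ℝ) 1), HasFDerivAt f (f' x) x)
    (hint : MemLp (fun x => f' x) (ENNReal.ofReal p)
      (volume.restrict (Set.Icc (0 : Fin d → ℝ) 1))) :
    ‖(n : ℂ) ^ (-(d : ℤ)) * ∑ m : Fin d → Fin n, f (fun i => (m i : ℝ) / n)
        - ∫ x in Set.Icc (0 : Fin d → ℝ) 1, f x‖ ≤
      2 * (n : ℝ) ^ (-1 + (d : ℝ) / p) / (1 - (d : ℝ) / p) *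
        (eLpNorm (fun x => f' x) (ENNReal.ofReal p)
          (volume.restrict (Set.Icc (0 : Fin d → ℝ) 1))).toReal := by
  classical
  have hd1 : (1:ℝ) ≤ (d:ℝ) := by exact_mod_cast hd
  have hp1 : 1 < p := lt_of_le_of_lt hd1 hp
  have hppos : 0 < p := by linarith
  have ha0 : 0 < (d:ℝ)/p := by positivity
  have ha1 : (d:ℝ)/p < 1 := by rw [div_lt_one hppos]; exact hp
  have hnpos : (0:ℝ) < n := by exact_mod_cast hn
  set r : ℝ := (n:ℝ)⁻¹ with hr'
  have hr : 0 < r := by positivity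
  set N := eLpNorm (fun x => f' x) (ENNReal.ofReal p)
    (volume.restrict (Set.Icc (0 : Fin d → ℝ) 1)) with hN
  have hNtop : N ≠ ⊤ := hint.2.ne
  -- relate eLpNorm to the fderiv lintegral
  have hU_ae : (Set.univ.pi fun _ : Fin d => Ioo (0:ℝ) 1) =ᵐ[volume] Icc (0:Fin d → ℝ) 1 := by
    rw [volume_pi]; exact Measure.univ_pi_Ioo_ae_eq_Icc
  have hNval : N = (∫⁻ y in Icc (0:Fin d → ℝ) 1, (‖fderiv ℝ f y‖₊ : ℝ≥0∞) ^ p) ^ (1/p) := by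
    rw [hN, eLpNorm_eq_lintegral_rpow_enorm_toReal (by simp [ENNReal.ofReal_eq_zero]; linarith)
      ENNReal.ofReal_ne_top, ENNReal.toReal_ofReal hppos.le]
    congr 1
    rw [← Measure.restrict_congr_set hU_ae]
    refine lintegral_congr_ae ?_
    filter_upwards [ae_restrict_mem (MeasurableSet.univ_pi fun _ => measurableSet_Ioo)]
      with x hx
    rw [(hdf x hx).fderiv]; rfl
  -- cell data
  have hηξ : ∀ (m : Fin d → Fin n) (i : Fin d), ((m i : ℝ) + 1)/n = (m i : ℝ)/n + r := by
    intro m i; rw [hr']; field_simp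
  have hξ0 : ∀ (m : Fin d → Fin n) (i : Fin d), 0 ≤ (m i : ℝ)/n := by
    intro m i; positivity
  have hη1 : ∀ (m : Fin d → Fin n) (i : Fin d), ((m i : ℝ) + 1)/n ≤ 1 := by
    intro m i
    rw [div_le_one hnpos]
    have : (m i : ℕ) < n := (m i).isLt
    exact_mod_cast Nat.succ_le_of_lt this
  set Q : (Fin d → Fin n) → Set (Fin d → ℝ) :=
    fun m => Icc (fun i => (m i : ℝ)/n) (fun i => ((m i : ℝ) + 1)/n) with hQ
  set R : (Fin d → Fin n) → Set (Fin d → ℝ) :=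
    fun m => Set.univ.pi fun i => Ico ((m i : ℝ)/n) (((m i : ℝ) + 1)/n) with hR
  have hQsub : ∀ m, Q m ⊆ Icc (0:Fin d → ℝ) 1 := by
    intro m
    apply Icc_subset_Icc
    · intro i; simpa using hξ0 m i
    · intro i; simpa using hη1 m i
  have hRmeas : ∀ m, MeasurableSet (R m) := fun m =>
    MeasurableSet.univ_pi fun i => measurableSet_Ico
  have hRQ : ∀ m, (R m : Set (Fin d → ℝ)) =ᵐ[volume] Q m := by
    intro m; rw [volume_pi]; exact Measure.univ_pi_Ico_ae_eq_Icc
  have hdisj : Pairwise (Function.onFun Disjoint R) := by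
    intro m m' hmm
    obtain ⟨i, hi⟩ := Function.ne_iff.mp hmm
    refine Set.disjoint_left.mpr fun x hx hx' => ?_
    have h1 := hx i (mem_univ i)
    have h2 := hx' i (mem_univ i)
    rcases hi.lt_or_gt with h | h
    · have hval : (m i : ℕ) < (m' i : ℕ) := h
      have hcast : (m i : ℝ) + 1 ≤ (m' i : ℝ) := by exact_mod_cast Nat.succ_le_of_lt hval
      have hle : ((m i : ℝ) + 1)/n ≤ (m' i : ℝ)/n := by gcongr
      linarith [h1.2, h2.1]
    · have hval : (m' i : ℕ) < (m i : ℕ) := h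
      have hcast : (m' i : ℝ) + 1 ≤ (m i : ℝ) := by exact_mod_cast Nat.succ_le_of_lt hval
      have hle : ((m' i : ℝ) + 1)/n ≤ (m i : ℝ)/n := by gcongr
      linarith [h2.2, h1.1]
  have hunion : (Set.univ.pi fun _ : Fin d => Ico (0:ℝ) 1) = ⋃ m, R m := by
    ext x
    simp only [mem_iUnion, Set.mem_univ_pi, hR]
    constructor
    · intro hx
      have hfl : ∀ i, ⌊x i * n⌋₊ < n := by
        intro i
        rw [Nat.floor_lt (by nlinarith [(hx i).1])]
        nlinarith [(hx i).2]
      refine ⟨fun i => ⟨⌊x i * n⌋₊, hfl i⟩, fun i => ?_⟩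
      have hnn : 0 ≤ x i * n := by nlinarith [(hx i).1]
      constructor
      · show ((⌊x i * n⌋₊ : ℝ))/n ≤ x i
        rw [div_le_iff₀ hnpos]
        exact Nat.floor_le hnn
      · show x i < ((⌊x i * n⌋₊ : ℝ) + 1)/n
        rw [lt_div_iff₀ hnpos]
        exact Nat.lt_floor_add_one _
    · rintro ⟨m, hm⟩ i
      have h := hm i
      exact ⟨le_trans (hξ0 m i) h.1, lt_of_lt_of_le h.2 (hη1 m i)⟩
  -- integrability
  have hfint : IntegrableOn f (Icc (0:Fin d → ℝ) 1) volume :=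
    hf.integrableOn_compact isCompact_Icc
  have hQint : ∀ m, IntegrableOn f (Q m) volume := fun m => hfint.mono_set (hQsub m)
  have hsplit : ∫ x in Icc (0:Fin d → ℝ) 1, f x = ∑ m : Fin d → Fin n, ∫ x in Q m, f x := by
    have hIco_ae : (Set.univ.pi fun _ : Fin d => Ico (0:ℝ) 1) =ᵐ[volume] Icc (0:Fin d → ℝ) 1 := by
      rw [volume_pi]; exact Measure.univ_pi_Ico_ae_eq_Icc
    rw [← setIntegral_congr_set hIco_ae, hunion]
    rw [integral_iUnion hRmeas hdisj ?hint]
    case hint =>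
      apply hfint.mono_set
      rw [← hunion]
      intro x hx
      exact ⟨fun i => (hx i (mem_univ i)).1, fun i => (hx i (mem_univ i)).2.le⟩
    rw [tsum_fintype]
    exact Finset.sum_congr rfl fun m _ => setIntegral_congr_set (hRQ m)
  -- volume of cells
  have hvolQ : ∀ m, volume (Q m) = ENNReal.ofReal (r ^ (d:ℕ)) := by
    intro m
    rw [hQ, Real.volume_Icc_pi]
    have hcongr : ∀ i ∈ Finset.univ, ENNReal.ofReal (((m i : ℝ) + 1)/n - (m i : ℝ)/n)
        = ENNReal.ofReal r := by
      intro i _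
      congr 1
      rw [hηξ m i]; ring
    rw [Finset.prod_congr rfl hcongr, Finset.prod_const, Finset.card_univ, Fintype.card_fin,
      ← ENNReal.ofReal_pow hr.le]
  have hzeta : (n : ℂ) ^ (-(d : ℤ)) = ((r ^ (d:ℕ) : ℝ) : ℂ) := by
    rw [zpow_neg, zpow_natCast, hr']
    push_cast
    rw [inv_pow]
  have hconst : ∀ m : Fin d → Fin n, ∫ _x in Q m, f (fun i => (m i : ℝ)/n) ∂volume
      = (r ^ (d:ℕ)) • f (fun i => (m i : ℝ)/n) := by
    intro m
    rw [setIntegral_const, measureReal_def, hvolQ m, ENNReal.toReal_ofReal (by positivity)]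
  have hsub : ∀ m : Fin d → Fin n, ∫ x in Q m, (f (fun i => (m i : ℝ)/n) - f x)
      = (∫ _x in Q m, f (fun i => (m i : ℝ)/n) ∂volume) - ∫ x in Q m, f x := by
    intro m
    apply integral_sub _ (hQint m)
    exact integrableOn_const (by rw [hvolQ m]; exact ENNReal.ofReal_ne_top)
  have hkey : (n : ℂ) ^ (-(d : ℤ)) * (∑ m : Fin d → Fin n, f (fun i => (m i : ℝ) / n))
      - ∫ x in Icc (0:Fin d → ℝ) 1, f x
      = ∑ m : Fin d → Fin n, ∫ x in Q m, (f (fun i => (m i : ℝ)/n) - f x) := by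
    rw [Finset.sum_congr rfl fun m _ => hsub m, Finset.sum_sub_distrib, hsplit]
    congr 1
    rw [Finset.mul_sum]
    refine Finset.sum_congr rfl fun m _ => ?_
    rw [hconst m, hzeta, Complex.real_smul]
  -- per-cube estimate
  set C : ℝ := r ^ (1 + ((d:ℝ) - (d:ℝ)/p)) / (1 - (d:ℝ)/p) with hC
  have h1a : 0 < 1 - (d:ℝ)/p := by linarith
  have hCpos : 0 ≤ C := by
    rw [hC]
    positivity
  have hcube : ∀ m : Fin d → Fin n, ‖∫ x in Q m, (f (fun i => (m i : ℝ)/n) - f x)‖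
      ≤ C * N.toReal := by
    intro m
    have hintQ : IntegrableOn (fun x => f (fun i => (m i : ℝ)/n) - f x) (Q m) volume := by
      apply Integrable.sub _ (hQint m)
      exact integrableOn_const (by rw [hvolQ m]; exact ENNReal.ofReal_ne_top)
    have hCB := cube_bound d hd p hp f f' hf hdf (fun i => (m i : ℝ)/n)
      (fun i => ((m i : ℝ) + 1)/n) r hr (fun i => hηξ m i) (fun i => hξ0 m i)
      (fun i => hη1 m i)
    rw [← hNval] at hCB
    calc ‖∫ x in Q m, (f (fun i => (m i : ℝ)/n) - f x)‖
        ≤ ∫ x in Q m, ‖f (fun i => (m i : ℝ)/n) - f x‖ := norm_integral_le_integral_norm _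
      _ = (∫⁻ x in Q m, (‖f x - f (fun i => (m i : ℝ)/n)‖₊ : ℝ≥0∞)).toReal := by
          rw [show (∫⁻ x in Q m, (‖f x - f (fun i => (m i : ℝ)/n)‖₊ : ℝ≥0∞))
              = ∫⁻ x in Q m, (‖f (fun i => (m i : ℝ)/n) - f x‖₊ : ℝ≥0∞) from
            lintegral_congr fun x => by
              rw [← ofReal_norm_eq_coe_nnnorm, ← ofReal_norm_eq_coe_nnnorm, norm_sub_rev]]
          rw [← ofReal_integral_norm_eq_lintegral_nnnorm hintQ,
            ENNReal.toReal_ofReal (integral_nonneg fun x => norm_nonneg _)]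
      _ ≤ (ENNReal.ofReal C * N).toReal := by
          apply ENNReal.toReal_mono
          · exact ENNReal.mul_ne_top ENNReal.ofReal_ne_top hNtop
          · exact hCB
      _ = C * N.toReal := by
          rw [ENNReal.toReal_mul, ENNReal.toReal_ofReal hCpos]
  -- final computation
  have hcard : (Fintype.card (Fin d → Fin n) : ℝ) = (n:ℝ) ^ (d:ℕ) := by
    rw [Fintype.card_fun, Fintype.card_fin, Fintype.card_fin]
    push_cast
    ring
  have hpow : ((n:ℝ) ^ (d:ℕ)) * C = (n:ℝ) ^ (-1 + (d:ℝ)/p) / (1 - (d:ℝ)/p) := by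
    rw [hC, hr', Real.inv_rpow hnpos.le, ← Real.rpow_neg hnpos.le,
      ← Real.rpow_natCast (n:ℝ) d, div_eq_mul_inv, div_eq_mul_inv, ← mul_assoc,
      ← Real.rpow_add hnpos]
    congr 2
    ring
  calc ‖(n : ℂ) ^ (-(d : ℤ)) * ∑ m : Fin d → Fin n, f (fun i => (m i : ℝ) / n)
        - ∫ x in Set.Icc (0 : Fin d → ℝ) 1, f x‖
      = ‖∑ m : Fin d → Fin n, ∫ x in Q m, (f (fun i => (m i : ℝ)/n) - f x)‖ := by
        rw [hkey]
    _ ≤ ∑ m : Fin d → Fin n, ‖∫ x in Q m, (f (fun i => (m i : ℝ)/n) - f x)‖ :=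
        norm_sum_le _ _
    _ ≤ ∑ _m : Fin d → Fin n, C * N.toReal := Finset.sum_le_sum fun m _ => hcube m
    _ = ((n:ℝ) ^ (d:ℕ)) * C * N.toReal := by
        rw [Finset.sum_const, Finset.card_univ, nsmul_eq_mul, hcard, mul_assoc]
    _ = (n:ℝ) ^ (-1 + (d:ℝ)/p) / (1 - (d:ℝ)/p) * N.toReal := by rw [hpow]
    _ ≤ 2 * (n : ℝ) ^ (-1 + (d : ℝ) / p) / (1 - (d : ℝ) / p) * N.toReal := by
        have hb : 0 ≤ (n:ℝ) ^ (-1 + (d:ℝ)/p) / (1 - (d:ℝ)/p) * N.toReal := by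
          have := Real.rpow_pos_of_pos hnpos (-1 + (d:ℝ)/p)
          positivity
        linarith [hb, (by ring : 2 * (n:ℝ) ^ (-1 + (d:ℝ)/p) / (1 - (d:ℝ)/p) * N.toReal
          = 2*((n:ℝ) ^ (-1 + (d:ℝ)/p) / (1 - (d:ℝ)/p) * N.toReal))]
end

section
/- Let $h > 0$, $0 < q_1 < q_2 < 1$, and let $V : \mathbb{R} \to \mathbb{R}$ be the 1-periodic function equal to $-h$ on $[q_1, q_2]$ and $0$ on $[0,1] \setminus [q_1, q_2]$. Let $\tilde{V} : \mathbb{R} \to \mathbb{R}$ be any 1-periodic, locally integrable function with $\tilde{V} \leq 0$. For $n \in \mathbb{N}$ let $\phi_n : \mathbb{R} \to \mathbb{R}$ be defined by $\phi_n(x) = 1/\sqrt{2n}$ on $[-n,n]$, linear from $1/\sqrt{2n}$ to $0$ on $[-n-1,-n]$ and $[n,n+1]$, and $0$ elsewhere. Then $\int_{\mathbb{R}} |\phi_n'|^2\,dx + \int_{\mathbb{R}} (\tilde{V} + V)|\phi_n|^2\,dx \leq \frac{1}{n} - (q_2 - q_1)h$. -/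
/-- Quadratic-form estimate (Lemma on upper bound of the numerical range):
with `V` the 1-periodic square well equal to `-h` on `[q₁,q₂]`, `W ≤ 0` 1-periodic
locally integrable, and `φₙ` the plateau test function with a.e. derivative `ψₙ`,
one has `∫ |φₙ'|² + ∫ (W + V)|φₙ|² ≤ 1/n - (q₂ - q₁) h`. -/
theorem square_well_form_upper_bound (h q1 q2 : ℝ) (hh : 0 < h)
    (hq1 : 0 < q1) (hq12 : q1 < q2) (hq2 : q2 < 1)
    (V W : ℝ → ℝ)
    (hVper : ∀ x, V (x + 1) = V x)
    (hVdef : ∀ x ∈ Set.Ico (0 : ℝ) 1, V x = if q1 ≤ x ∧ x ≤ q2 then -h else 0)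
    (hWper : ∀ x, W (x + 1) = W x)
    (hWle : ∀ x, W x ≤ 0)
    (hWloc : MeasureTheory.LocallyIntegrable W MeasureTheory.volume)
    (n : ℕ) (hn : 0 < n)
    (φ ψ : ℝ → ℝ)
    (hφ : ∀ x, φ x = if |x| ≤ (n : ℝ) then 1 / Real.sqrt (2 * n)
      else if |x| ≤ (n : ℝ) + 1 then ((n : ℝ) + 1 - |x|) / Real.sqrt (2 * n) else 0)
    (hψ : ∀ x, ψ x = if -(n : ℝ) - 1 < x ∧ x < -(n : ℝ) then 1 / Real.sqrt (2 * n)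
      else if (n : ℝ) < x ∧ x < (n : ℝ) + 1 then -(1 / Real.sqrt (2 * n)) else 0) :
    (∫ x, ψ x ^ 2) + ∫ x, (W x + V x) * φ x ^ 2 ≤ 1 / (n : ℝ) - (q2 - q1) * h := by
  classical
  have hn' : (0:ℝ) < n := by exact_mod_cast hn
  have h2n : (0:ℝ) < 2 * n := by linarith
  have hcsq : (1 / Real.sqrt (2 * (n:ℝ))) ^ 2 = 1 / (2 * n) := by
    rw [div_pow, one_pow, Real.sq_sqrt h2n.le]
  -- Step 1: ∫ ψ² = 1/n
  have hS : ∫ x, ψ x ^ 2 = 1 / (n : ℝ) := by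
    have hψsq : (fun x => ψ x ^ 2) =
        (Set.Ioo (-(n:ℝ)-1) (-(n:ℝ)) ∪ Set.Ioo ((n:ℝ)) ((n:ℝ)+1)).indicator
          (fun _ => 1 / (2 * (n:ℝ))) := by
      funext x
      rw [hψ x, Set.indicator_apply]
      simp only [Set.mem_union, Set.mem_Ioo]
      by_cases h1 : -(n:ℝ)-1 < x ∧ x < -(n:ℝ)
      · rw [if_pos h1, if_pos (Or.inl h1), hcsq]
      · rw [if_neg h1]
        by_cases h2 : (n:ℝ) < x ∧ x < (n:ℝ)+1
        · rw [if_pos h2, if_pos (Or.inr h2), neg_sq, hcsq]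
        · rw [if_neg h2, if_neg (by tauto)]
          simp
    rw [hψsq, MeasureTheory.integral_indicator_const _
      ((measurableSet_Ioo).union measurableSet_Ioo)]
    have hdisj : Disjoint (Set.Ioo (-(n:ℝ)-1) (-(n:ℝ))) (Set.Ioo ((n:ℝ)) ((n:ℝ)+1)) := by
      apply Set.disjoint_left.mpr
      intro x hx hx'
      have := hx.2; have := hx'.1
      linarith
    rw [MeasureTheory.measureReal_def, MeasureTheory.measure_union hdisj measurableSet_Ioo, Real.volume_Ioo, Real.volume_Ioo]
    have e1 : -(n:ℝ) - (-(n:ℝ)-1) = 1 := by ring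
    have e2 : ((n:ℝ)+1) - (n:ℝ) = 1 := by ring
    rw [e1, e2, ← ENNReal.ofReal_add (by norm_num) (by norm_num)]
    norm_num
    ring
  -- V in terms of fract
  have hVint : ∀ (k : ℤ) (x : ℝ), V (x + k) = V x := by
    intro k x
    have hper : Function.Periodic V 1 := hVper
    have := (hper.int_mul k) x
    simpa using this
  have hVfract : ∀ x, V x = if q1 ≤ Int.fract x ∧ Int.fract x ≤ q2 then -h else 0 := by
    intro x
    have h1 : V (Int.fract x) = V x := by
      have := hVint (-⌊x⌋) x
      simpa [Int.fract, sub_eq_add_neg] using this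
    rw [← h1, hVdef _ ⟨Int.fract_nonneg x, Int.fract_lt_one x⟩]
  have hVle : ∀ x, V x ≤ 0 := by
    intro x
    rw [hVfract x]
    split <;> simp [hh.le]
  have hVabs : ∀ x, |V x| ≤ h := by
    intro x
    rw [hVfract x]
    split <;> simp [abs_of_nonneg hh.le, hh.le]
  have hVmeas : Measurable V := by
    have : V = fun x => if q1 ≤ Int.fract x ∧ Int.fract x ≤ q2 then -h else 0 :=
      funext hVfract
    rw [this]
    have hset : MeasurableSet {x : ℝ | q1 ≤ Int.fract x ∧ Int.fract x ≤ q2} := by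
      have : {x : ℝ | q1 ≤ Int.fract x ∧ Int.fract x ≤ q2}
          = Int.fract ⁻¹' (Set.Icc q1 q2) := rfl
      rw [this]
      exact measurable_fract measurableSet_Icc
    exact Measurable.ite hset measurable_const measurable_const
  -- φ measurability and bounds
  have hφmeas : Measurable φ := by
    have : φ = fun x => if |x| ≤ (n : ℝ) then 1 / Real.sqrt (2 * n)
        else if |x| ≤ (n : ℝ) + 1 then ((n : ℝ) + 1 - |x|) / Real.sqrt (2 * n) else 0 :=
      funext hφ
    rw [this]
    have hs1 : MeasurableSet {x : ℝ | |x| ≤ (n:ℝ)} :=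
      measurable_abs measurableSet_Iic
    have hs2 : MeasurableSet {x : ℝ | |x| ≤ (n:ℝ) + 1} :=
      measurable_abs measurableSet_Iic
    exact Measurable.ite hs1 measurable_const
      (Measurable.ite hs2 ((measurable_const.sub measurable_abs).div_const _) measurable_const)
  have hφsq_le : ∀ x, φ x ^ 2 ≤ 1 / (2 * (n:ℝ)) := by
    intro x
    rw [hφ x]
    by_cases h1 : |x| ≤ (n:ℝ)
    · rw [if_pos h1, hcsq]
    · rw [if_neg h1]
      by_cases h2 : |x| ≤ (n:ℝ) + 1
      · rw [if_pos h2, div_pow, Real.sq_sqrt h2n.le]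
        push_neg at h1
        have h3 : 0 ≤ (n:ℝ) + 1 - |x| := by linarith
        have h4 : (n:ℝ) + 1 - |x| ≤ 1 := by linarith
        have hnum : ((n:ℝ) + 1 - |x|) ^ 2 ≤ 1 := by nlinarith
        gcongr
      · rw [if_neg h2]
        have : (0:ℝ) ≤ 1 / (2*(n:ℝ)) := by positivity
        simpa using this
  have hφplateau : ∀ x, |x| ≤ (n:ℝ) → φ x ^ 2 = 1 / (2 * (n:ℝ)) := by
    intro x hx
    rw [hφ x, if_pos hx, hcsq]
  have hφzero : ∀ x, (n:ℝ) + 1 < |x| → φ x = 0 := by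
    intro x hx
    rw [hφ x, if_neg (by linarith), if_neg (by linarith)]
  -- the union of wells A
  set A : Set ℝ := ⋃ k ∈ Finset.range (2*n), Set.Icc ((k:ℝ) - n + q1) ((k:ℝ) - n + q2)
    with hA
  have hAmeas : MeasurableSet A :=
    MeasurableSet.biUnion (Finset.range (2*n)).countable_toSet
      (fun k _ => measurableSet_Icc)
  have hAsub : ∀ x ∈ A, |x| ≤ (n:ℝ) := by
    intro x hx
    rw [hA, Set.mem_iUnion₂] at hx
    obtain ⟨k, hk, hxk⟩ := hx
    rw [Finset.mem_range] at hk
    have hk' : (k:ℝ) ≤ 2*n - 1 := by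
      have : (k:ℝ) + 1 ≤ 2*n := by exact_mod_cast Nat.succ_le_of_lt hk
      linarith
    rw [abs_le]
    constructor
    · have := hxk.1; have : (0:ℝ) ≤ (k:ℝ) := Nat.cast_nonneg k; linarith [hxk.1]
    · have := hxk.2; linarith
  have hVA : ∀ x ∈ A, V x = -h := by
    intro x hx
    rw [hA, Set.mem_iUnion₂] at hx
    obtain ⟨k, hk, hxk⟩ := hx
    have hm : Int.fract x = x - ((k:ℤ) - (n:ℤ)) := by
      have h0 : (0:ℝ) ≤ x - ((k:ℤ) - (n:ℤ)) := by
        push_cast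
        have := hxk.1
        linarith
      have h1 : x - ((k:ℤ) - (n:ℤ)) < 1 := by
        push_cast
        have := hxk.2
        linarith
      have : Int.fract (((k:ℤ) - (n:ℤ) : ℤ) + (x - ((k:ℤ) - (n:ℤ)))) =
          Int.fract (x - ((k:ℤ) - (n:ℤ))) := Int.fract_intCast_add _ _
      rw [Int.fract_eq_self.mpr ⟨h0, h1⟩] at this
      have e : (((k:ℤ) - (n:ℤ) : ℤ) : ℝ) + (x - ((k:ℤ) - (n:ℤ))) = x := by push_cast; ring
      rw [e] at this
      exact this
    rw [hVfract x, hm]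
    have hc1 : q1 ≤ x - ((k:ℤ) - (n:ℤ)) := by push_cast; linarith [hxk.1]
    have hc2 : x - ((k:ℤ) - (n:ℤ)) ≤ q2 := by push_cast; linarith [hxk.2]
    rw [if_pos ⟨hc1, hc2⟩]
  have hvolA : MeasureTheory.volume A = ENNReal.ofReal ((2*n) * (q2 - q1)) := by
    rw [hA]
    have hpd : (↑(Finset.range (2*n)) : Set ℕ).PairwiseDisjoint
        (fun k => Set.Icc ((k:ℝ) - n + q1) ((k:ℝ) - n + q2)) := by
      intro i _ j _ hij
      apply Set.disjoint_left.mpr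
      intro x hxi hxj
      rcases lt_or_gt_of_ne hij with hlt | hlt
      · have h1 : (i:ℝ) + 1 ≤ (j:ℝ) := by exact_mod_cast Nat.succ_le_of_lt hlt
        have := hxi.2; have := hxj.1
        linarith
      · have h1 : (j:ℝ) + 1 ≤ (i:ℝ) := by exact_mod_cast Nat.succ_le_of_lt hlt
        have := hxi.1; have := hxj.2
        linarith
    rw [MeasureTheory.measure_biUnion_finset hpd (fun k _ => measurableSet_Icc)]
    have hterm : ∀ k ∈ Finset.range (2*n),
        MeasureTheory.volume (Set.Icc ((k:ℝ) - n + q1) ((k:ℝ) - n + q2))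
          = ENNReal.ofReal (q2 - q1) := by
      intro k _
      rw [Real.volume_Icc]
      congr 1
      ring
    rw [Finset.sum_congr rfl hterm, Finset.sum_const, Finset.card_range, nsmul_eq_mul]
    rw [← ENNReal.ofReal_natCast, ← ENNReal.ofReal_mul (by positivity)]
    congr 1
    push_cast
    ring
  -- the dominating function g
  set g : ℝ → ℝ := A.indicator (fun _ => -(h / (2 * (n:ℝ)))) with hg
  have hle : ∀ x, (W x + V x) * φ x ^ 2 ≤ g x := by
    intro x
    rw [hg, Set.indicator_apply]
    by_cases hx : x ∈ A
    · rw [if_pos hx, hVA x hx, hφplateau x (hAsub x hx)]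
      have hW := hWle x
      have hpos : (0:ℝ) < 1 / (2 * (n:ℝ)) := by positivity
      have h1 : W x + -h ≤ -h := by linarith
      have h2 : (W x + -h) * (1 / (2*(n:ℝ))) ≤ (-h) * (1 / (2*(n:ℝ))) :=
        mul_le_mul_of_nonneg_right h1 hpos.le
      have h3 : (-h) * (1 / (2*(n:ℝ))) = -(h / (2*(n:ℝ))) := by ring
      rw [← h3]
      exact h2
    · rw [if_neg hx]
      apply mul_nonpos_of_nonpos_of_nonneg
      · linarith [hWle x, hVle x]
      · positivity
  -- integrability of the LHS
  set K : Set ℝ := Set.Icc (-(n:ℝ)-1) ((n:ℝ)+1) with hK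
  have hsupp : ∀ x ∉ K, (W x + V x) * φ x ^ 2 = 0 := by
    intro x hx
    have : (n:ℝ) + 1 < |x| := by
      rw [hK, Set.mem_Icc] at hx
      push_neg at hx
      rcases le_or_gt (-(n:ℝ)-1) x with h1 | h1
      · have := hx h1
        rw [abs_of_pos (by linarith)]
        exact this
      · rw [abs_of_neg (by linarith)]
        linarith
    rw [hφzero x this]
    ring
  have hfind : (fun x => (W x + V x) * φ x ^ 2) =
      K.indicator (fun x => (W x + V x) * φ x ^ 2) := by
    funext x
    rw [Set.indicator_apply]
    by_cases hx : x ∈ K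
    · rw [if_pos hx]
    · rw [if_neg hx, hsupp x hx]
  have hVK : MeasureTheory.IntegrableOn V K := by
    apply MeasureTheory.Measure.integrableOn_of_bounded (M := h)
    · rw [hK, Real.volume_Icc]; exact ENNReal.ofReal_ne_top
    · exact hVmeas.aestronglyMeasurable
    · filter_upwards with x
      simpa using hVabs x
  have hWVK : MeasureTheory.IntegrableOn (fun x => W x + V x) K :=
    (hWloc.integrableOn_isCompact isCompact_Icc).add hVK
  have hfK : MeasureTheory.IntegrableOn (fun x => (W x + V x) * φ x ^ 2) K := by
    have hb := MeasureTheory.Integrable.bdd_mul (f := fun x => φ x ^ 2) hWVK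
      ((hφmeas.pow_const 2).aestronglyMeasurable)
      (c := 1 / (2 * (n:ℝ))) (Filter.Eventually.of_forall fun x => by
        rw [Real.norm_eq_abs, abs_of_nonneg (by positivity)]
        exact hφsq_le x)
    exact hb.congr (Filter.Eventually.of_forall fun x => mul_comm _ _)
  have hfint : MeasureTheory.Integrable (fun x => (W x + V x) * φ x ^ 2) := by
    rw [hfind]
    exact (MeasureTheory.integrable_indicator_iff measurableSet_Icc).mpr hfK
  have hgint : MeasureTheory.Integrable g := by
    rw [hg]
    apply (MeasureTheory.integrable_indicator_iff hAmeas).mpr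
    apply (MeasureTheory.integrableOn_const_iff enorm_ne_top).mpr
    right
    rw [hvolA]
    exact ENNReal.ofReal_lt_top
  -- conclusion
  have hmono : ∫ x, (W x + V x) * φ x ^ 2 ≤ ∫ x, g x :=
    MeasureTheory.integral_mono hfint hgint hle
  have hgval : ∫ x, g x = -((q2 - q1) * h) := by
    rw [hg, MeasureTheory.integral_indicator_const _ hAmeas, MeasureTheory.measureReal_def, hvolA,
      ENNReal.toReal_ofReal (by nlinarith)]
    rw [smul_eq_mul]
    field_simp
  rw [hS]
  rw [hgval] at hmono
  linarith
end

section
/- Let $H$ be a Hilbert space, $H_0$ a positive invertible self-adjoint operator, and $B$ a densely defined operator such that $K(\lambda) := H_0^{-1/2} B H_0^{1/2} (\lambda - H_0)^{-1}$ extends to a bounded operator for $\lambda \notin \sigma(H_0)$. Then for $\lambda \notin \sigma(H_0)$, the operator $\lambda - H_0 - B$ has a bounded inverse if and only if $I - K(\lambda)$ has a bounded inverse, and in that case $(\lambda - H_0 - B)^{-1} = (\lambda - H_0)^{-1} H_0^{1/2} (I - K(\lambda))^{-1} H_0^{-1/2}$. -/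
/-- Birman–Schwinger principle (bounded form): let `H₀` be a positive invertible
self-adjoint bounded operator with square root `S` (`S·S = H₀`, `S` invertible),
`B` bounded, and `λ ∉ σ(H₀)`. With `K(λ) = H₀^{-1/2} B H₀^{1/2} (λ - H₀)⁻¹`,
the operator `λ - H₀ - B` is boundedly invertible iff `I - K(λ)` is, and then
`(λ - H₀ - B)⁻¹ = (λ - H₀)⁻¹ H₀^{1/2} (I - K(λ))⁻¹ H₀^{-1/2}`. -/
theorem birman_schwinger_principle {H : Type*} [NormedAddCommGroup H]
    [InnerProductSpace ℂ H] [CompleteSpace H]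
    (H₀ B : H →L[ℂ] H) (hsa : IsSelfAdjoint H₀)
    (hpos : ∀ x : H, 0 ≤ (inner ℂ (H₀ x) x : ℂ).re)
    (S : (H →L[ℂ] H)ˣ) (hS : (S : H →L[ℂ] H) * (S : H →L[ℂ] H) = H₀)
    (lam : ℂ) (hlam : lam ∉ spectrum ℂ H₀) :
    (IsUnit (lam • (1 : H →L[ℂ] H) - H₀ - B) ↔
      IsUnit ((1 : H →L[ℂ] H) -
        (↑S⁻¹ : H →L[ℂ] H) * B * (S : H →L[ℂ] H) *
          Ring.inverse (lam • (1 : H →L[ℂ] H) - H₀))) ∧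
    (IsUnit (lam • (1 : H →L[ℂ] H) - H₀ - B) →
      Ring.inverse (lam • (1 : H →L[ℂ] H) - H₀ - B) =
        Ring.inverse (lam • (1 : H →L[ℂ] H) - H₀) * (S : H →L[ℂ] H) *
          Ring.inverse ((1 : H →L[ℂ] H) -
            (↑S⁻¹ : H →L[ℂ] H) * B * (S : H →L[ℂ] H) *
              Ring.inverse (lam • (1 : H →L[ℂ] H) - H₀)) *
          (↑S⁻¹ : H →L[ℂ] H)) := by
  set A : H →L[ℂ] H := lam • (1 : H →L[ℂ] H) - H₀ with hAdef
  have hA : IsUnit A := by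
    rw [spectrum.notMem_iff] at hlam
    simpa [hAdef, Algebra.algebraMap_eq_smul_one] using hlam
  set R : H →L[ℂ] H := Ring.inverse A with hRdef
  have hRA : R * A = 1 := Ring.inverse_mul_cancel A hA
  have hAR : A * R = 1 := Ring.mul_inverse_cancel A hA
  have hSA : (S : H →L[ℂ] H) * A = A * (S : H →L[ℂ] H) := by
    simp only [hAdef, mul_sub, sub_mul, ← hS, mul_smul_comm, smul_mul_assoc,
      mul_one, one_mul, mul_assoc]
  have hSR : (S : H →L[ℂ] H) * R = R * (S : H →L[ℂ] H) := by
    calc (S : H →L[ℂ] H) * R = R * A * ((S : H →L[ℂ] H) * R) := by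
          rw [hRA, one_mul]
      _ = R * ((S : H →L[ℂ] H) * A) * R := by
          rw [hSA]; simp only [mul_assoc]
      _ = R * (S : H →L[ℂ] H) * (A * R) := by simp only [mul_assoc]
      _ = R * (S : H →L[ℂ] H) := by rw [hAR, mul_one]
  have hSiR : (↑S⁻¹ : H →L[ℂ] H) * R = R * (↑S⁻¹ : H →L[ℂ] H) := by
    calc (↑S⁻¹ : H →L[ℂ] H) * R
        = (↑S⁻¹ : H →L[ℂ] H) * (R * ((S : H →L[ℂ] H) * (↑S⁻¹ : H →L[ℂ] H))) := by
          rw [S.mul_inv, mul_one]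
      _ = (↑S⁻¹ : H →L[ℂ] H) * (R * (S : H →L[ℂ] H) * (↑S⁻¹ : H →L[ℂ] H)) := by
          rw [mul_assoc]
      _ = (↑S⁻¹ : H →L[ℂ] H) * ((S : H →L[ℂ] H) * R * (↑S⁻¹ : H →L[ℂ] H)) := by
          rw [hSR]
      _ = (↑S⁻¹ : H →L[ℂ] H) * (S : H →L[ℂ] H) * (R * (↑S⁻¹ : H →L[ℂ] H)) := by
          simp only [mul_assoc]
      _ = R * (↑S⁻¹ : H →L[ℂ] H) := by rw [S.inv_mul, one_mul]
  set M : H →L[ℂ] H :=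
    (1 : H →L[ℂ] H) - (↑S⁻¹ : H →L[ℂ] H) * B * (S : H →L[ℂ] H) * R with hMdef
  have key : A - B = (S : H →L[ℂ] H) * M * ((↑S⁻¹ : H →L[ℂ] H) * A) := by
    have e1 : (S : H →L[ℂ] H) * M
        = (S : H →L[ℂ] H) - B * (S : H →L[ℂ] H) * R := by
      rw [hMdef, mul_sub, mul_one]
      congr 1
      rw [← mul_assoc, ← mul_assoc, ← mul_assoc, S.mul_inv, one_mul]
    rw [e1, sub_mul]
    have e2 : (S : H →L[ℂ] H) * ((↑S⁻¹ : H →L[ℂ] H) * A) = A := by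
      rw [← mul_assoc, S.mul_inv, one_mul]
    have e3 : B * (S : H →L[ℂ] H) * R * ((↑S⁻¹ : H →L[ℂ] H) * A) = B := by
      calc B * (S : H →L[ℂ] H) * R * ((↑S⁻¹ : H →L[ℂ] H) * A)
          = B * ((S : H →L[ℂ] H) * (R * (↑S⁻¹ : H →L[ℂ] H)) * A) := by
            simp only [mul_assoc]
        _ = B * ((S : H →L[ℂ] H) * ((↑S⁻¹ : H →L[ℂ] H) * R) * A) := by rw [hSiR]
        _ = B * ((S : H →L[ℂ] H) * (↑S⁻¹ : H →L[ℂ] H) * (R * A)) := by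
            simp only [mul_assoc]
        _ = B := by rw [S.mul_inv, hRA, one_mul, mul_one]
    rw [e2, e3]
  have key' : (lam • (1 : H →L[ℂ] H) - H₀ - B : H →L[ℂ] H) = A - B := rfl
  constructor
  · rw [key', key]
    set uv : (H →L[ℂ] H)ˣ := S⁻¹ * hA.unit with huv
    have hc : ((↑S⁻¹ : H →L[ℂ] H) * A) = (uv : H →L[ℂ] H) := by
      simp [huv, Units.val_mul]
    rw [hc, mul_assoc]
    rw [Units.isUnit_units_mul S (M * (uv : H →L[ℂ] H)),
      Units.isUnit_mul_units M uv]
  · intro hX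
    have hM : IsUnit M := by
      have := hX
      rw [key', key] at this
      set uv : (H →L[ℂ] H)ˣ := S⁻¹ * hA.unit with huv
      have hc : ((↑S⁻¹ : H →L[ℂ] H) * A) = (uv : H →L[ℂ] H) := by
        simp [huv, Units.val_mul]
      rw [hc, mul_assoc, Units.isUnit_units_mul S (M * (uv : H →L[ℂ] H)),
        Units.isUnit_mul_units M uv] at this
      exact this
    set N : H →L[ℂ] H := Ring.inverse M with hNdef
    have hMN : M * N = 1 := Ring.mul_inverse_cancel M hM
    have hNM : N * M = 1 := Ring.inverse_mul_cancel M hM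
    have hXY : (A - B) * (R * (S : H →L[ℂ] H) * N * (↑S⁻¹ : H →L[ℂ] H)) = 1 := by
      rw [key]
      calc (S : H →L[ℂ] H) * M * ((↑S⁻¹ : H →L[ℂ] H) * A) *
            (R * (S : H →L[ℂ] H) * N * (↑S⁻¹ : H →L[ℂ] H))
          = (S : H →L[ℂ] H) * (M * ((↑S⁻¹ : H →L[ℂ] H) * ((A * R) *
              ((S : H →L[ℂ] H) * (N * (↑S⁻¹ : H →L[ℂ] H)))))) := by
            simp only [mul_assoc]
        _ = (S : H →L[ℂ] H) * ((M * N) * (↑S⁻¹ : H →L[ℂ] H)) := by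
            rw [hAR, one_mul, ← mul_assoc ((↑S⁻¹ : H →L[ℂ] H)), S.inv_mul,
              one_mul]
            simp only [mul_assoc]
        _ = 1 := by rw [hMN, one_mul, S.mul_inv]
    have hXu : IsUnit (A - B) := hX
    have main : Ring.inverse (A - B) =
        R * (S : H →L[ℂ] H) * N * (↑S⁻¹ : H →L[ℂ] H) := by
      calc Ring.inverse (A - B)
          = Ring.inverse (A - B) *
            ((A - B) * (R * (S : H →L[ℂ] H) * N * (↑S⁻¹ : H →L[ℂ] H))) := by
            rw [hXY, mul_one]
        _ = (Ring.inverse (A - B) * (A - B)) *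
            (R * (S : H →L[ℂ] H) * N * (↑S⁻¹ : H →L[ℂ] H)) := by
            simp only [mul_assoc]
        _ = R * (S : H →L[ℂ] H) * N * (↑S⁻¹ : H →L[ℂ] H) := by
            rw [Ring.inverse_mul_cancel _ hXu, one_mul]
    exact main
end
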